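/- In a graph with unique shortest paths, the intersection of an isometric cycle C with any shortest path P is either empty or itself a shortest path (a contiguous subpath of P). -/

import Mathlib

open SimpleGraph

/-- The weight of a walk: sum of its edge weights. -/
def walkWeight {V : Type*} {G : SimpleGraph V} (w : Sym2 V → ℝ) {u v : V}
    (p : G.Walk u v) : ℝ :=
  (p.edges.map w).sum

/-- `p` is a shortest `u`-`v` path with respect to `w`. -/
def IsShortest {V : Type*} (G : SimpleGraph V) (w : Sym2 V → ℝ) {u v : V}
    (p : G.Walk u v) : Prop :=
  p.IsPath ∧ ∀ q : G.Walk u v, q.IsPath → walkWeight w p ≤ walkWeight w q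

/-- Shortest paths in `G` (w.r.t. `w`) are unique between every pair of vertices. -/
def UniqueShortestPaths {V : Type*} (G : SimpleGraph V) (w : Sym2 V → ℝ) : Prop :=
  ∀ (u v : V) (p q : G.Walk u v), IsShortest G w p → IsShortest G w q → p = q

/-- A cycle `c` is isometric: for any two vertices on `c`, some shortest path
between them in `G` is contained in `c`. -/
def IsIsometric {V : Type*} (G : SimpleGraph V) (w : Sym2 V → ℝ) {r : V}
    (c : G.Walk r r) : Prop :=
  ∀ u v : V, u ∈ c.support → v ∈ c.support →
    ∃ p : G.Walk u v, IsShortest G w p ∧ ∀ e ∈ p.edges, e ∈ c.edges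

section Aux

variable {V : Type*} {G : SimpleGraph V}

lemma walkWeight_append (w : Sym2 V → ℝ) {u v x : V} (p : G.Walk u v) (q : G.Walk v x) :
    walkWeight w (p.append q) = walkWeight w p + walkWeight w q := by
  simp [walkWeight, Walk.edges_append]

lemma darts_dropUntil_sublist [DecidableEq V] {u v x : V} (p : G.Walk u v)
    (h : x ∈ p.support) : (p.dropUntil x h).darts.Sublist p.darts := by
  conv_rhs => rw [← Walk.take_spec p h]
  rw [Walk.darts_append]
  exact List.sublist_append_right _ _

lemma darts_bypass_sublist [DecidableEq V] {u v : V} (p : G.Walk u v) :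
    p.bypass.darts.Sublist p.darts := by
  induction p with
  | nil => simp [Walk.bypass]
  | cons r q ih =>
    simp only [Walk.bypass]
    split_ifs with hs
    · exact ((darts_dropUntil_sublist _ hs).trans ih).trans
        (List.sublist_cons_self _ _)
    · exact ih.cons₂ _

lemma walkWeight_bypass_le [DecidableEq V] (w : Sym2 V → ℝ) (hw : ∀ e, 0 ≤ w e)
    {u v : V} (p : G.Walk u v) : walkWeight w p.bypass ≤ walkWeight w p := by
  apply List.Sublist.sum_le_sum
  · exact ((darts_bypass_sublist p).map Dart.edge).map w
  · rintro a ha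
    obtain ⟨e, -, rfl⟩ := List.mem_map.mp ha
    exact hw e

lemma takeUntil_cons_self [DecidableEq V] {s v t : V} (r : G.Adj s v) (q : G.Walk v t)
    (h : s ∈ (Walk.cons r q).support) : (Walk.cons r q).takeUntil s h = Walk.nil := by
  simp [Walk.takeUntil]

lemma takeUntil_cons_of_ne [DecidableEq V] {s v t a : V} (r : G.Adj s v) (q : G.Walk v t)
    (h : a ∈ (Walk.cons r q).support) (hne : s ≠ a) (ha : a ∈ q.support) :
    (Walk.cons r q).takeUntil a h = Walk.cons r (q.takeUntil a ha) := by
  simp only [Walk.takeUntil]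
  rw [dif_neg hne]

lemma dropUntil_cons_self [DecidableEq V] {s v t : V} (r : G.Adj s v) (q : G.Walk v t)
    (h : s ∈ (Walk.cons r q).support) : (Walk.cons r q).dropUntil s h = Walk.cons r q := by
  simp [Walk.dropUntil]

lemma dropUntil_cons_of_ne [DecidableEq V] {s v t a : V} (r : G.Adj s v) (q : G.Walk v t)
    (h : a ∈ (Walk.cons r q).support) (hne : s ≠ a) (ha : a ∈ q.support) :
    (Walk.cons r q).dropUntil a h = q.dropUntil a ha := by
  simp only [Walk.dropUntil]
  rw [dif_neg hne]

lemma mem_support_cases {u v x : V} (q : G.Walk u v) (hx : x ∈ q.support) :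
    x = u ∨ ∃ e ∈ q.edges, x ∈ e := by
  induction q with
  | nil => simp_all
  | cons r q ih =>
    rcases List.mem_cons.mp hx with h | h
    · exact Or.inl h
    · rcases ih h with rfl | ⟨e, he, hxe⟩
      · exact Or.inr ⟨_, List.mem_cons_self, Sym2.mem_mk_right _ _⟩
      · exact Or.inr ⟨e, List.mem_cons_of_mem _ he, hxe⟩

lemma exists_first [DecidableEq V] (P : V → Prop) :
    ∀ {s t : V} (p : G.Walk s t), (∃ x ∈ p.support, P x) →
    ∃ (a : V) (ha : a ∈ p.support), P a ∧
      ∀ x ∈ (p.takeUntil a ha).support, P x → x = a := by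
  intro s t p
  induction p with
  | nil =>
    rintro ⟨x, hx, hPx⟩
    rw [Walk.mem_support_nil_iff] at hx; subst hx
    refine ⟨x, Walk.start_mem_support _, hPx, fun y hy _ => ?_⟩
    have := Walk.support_takeUntil_subset _ (Walk.start_mem_support _) hy
    rwa [Walk.mem_support_nil_iff] at this
  | @cons s v t r q ih =>
    rintro ⟨x, hx, hPx⟩
    by_cases hPs : P s
    · refine ⟨s, Walk.start_mem_support _, hPs, fun y hy _ => ?_⟩
      rw [takeUntil_cons_self] at hy
      rwa [Walk.mem_support_nil_iff] at hy
    · have hxq : x ∈ q.support := by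
        rcases List.mem_cons.mp hx with rfl | h
        · exact absurd hPx hPs
        · exact h
      obtain ⟨a, ha, hPa, hfa⟩ := ih ⟨x, hxq, hPx⟩
      have hne : s ≠ a := fun h => hPs (h ▸ hPa)
      refine ⟨a, List.mem_cons_of_mem _ ha, hPa, fun y hy hPy => ?_⟩
      rw [takeUntil_cons_of_ne r q (List.mem_cons_of_mem _ ha) hne ha] at hy
      rcases List.mem_cons.mp hy with rfl | h
      · exact absurd hPy hPs
      · exact hfa y h hPy

lemma exists_last [DecidableEq V] (P : V → Prop) :
    ∀ {s t : V} (p : G.Walk s t), p.support.Nodup → (∃ x ∈ p.support, P x) →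
    ∃ (b : V) (hb : b ∈ p.support), P b ∧
      ∀ x ∈ (p.dropUntil b hb).support, P x → x = b := by
  intro s t p
  induction p with
  | nil =>
    rintro - ⟨x, hx, hPx⟩
    rw [Walk.mem_support_nil_iff] at hx; subst hx
    refine ⟨x, Walk.start_mem_support _, hPx, fun y hy _ => ?_⟩
    have := Walk.support_dropUntil_subset _ (Walk.start_mem_support _) hy
    rwa [Walk.mem_support_nil_iff] at this
  | @cons s v t r q ih =>
    rintro hnd ⟨x, hx, hPx⟩
    have hnd' : q.support.Nodup := (List.nodup_cons.mp hnd).2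
    have hsq : s ∉ q.support := (List.nodup_cons.mp hnd).1
    by_cases hq : ∃ y ∈ q.support, P y
    · obtain ⟨b, hb, hPb, hlb⟩ := ih hnd' hq
      have hne : s ≠ b := fun h => hsq (h ▸ hb)
      refine ⟨b, List.mem_cons_of_mem _ hb, hPb, fun y hy hPy => ?_⟩
      rw [dropUntil_cons_of_ne r q (List.mem_cons_of_mem _ hb) hne hb] at hy
      exact hlb y hy hPy
    · have hPs : P s := by
        rcases List.mem_cons.mp hx with rfl | h
        · exact hPx
        · exact absurd ⟨x, h, hPx⟩ hq
      refine ⟨s, Walk.start_mem_support _, hPs, fun y hy hPy => ?_⟩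
      rw [dropUntil_cons_self] at hy
      rcases List.mem_cons.mp hy with rfl | h
      · rfl
      · exact absurd ⟨y, h, hPy⟩ hq

end Aux

/-- In a graph with unique shortest paths, the intersection of an isometric cycle `C`
with any shortest path `P` is either empty or itself a shortest path, appearing as a
contiguous subpath of `P`. -/
theorem isometric_cycle_inter_shortest_path
    {V : Type*} (G : SimpleGraph V) (w : Sym2 V → ℝ)
    (hw : ∀ e, 0 ≤ w e)
    (huniq : UniqueShortestPaths G w)
    {r : V} (c : G.Walk r r) (hc : c.IsCycle) (hiso : IsIsometric G w c)
    {s t : V} (p : G.Walk s t) (hp : IsShortest G w p) :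
    (∀ x : V, ¬(x ∈ c.support ∧ x ∈ p.support)) ∨
    ∃ (a b : V) (q : G.Walk a b), IsShortest G w q ∧
      (∀ x : V, (x ∈ c.support ∧ x ∈ p.support) ↔ x ∈ q.support) ∧
      (∀ e ∈ q.edges, e ∈ p.edges) := by
  classical
  by_cases hex : ∃ x : V, x ∈ c.support ∧ x ∈ p.support
  swap
  · exact Or.inl (fun x hx => hex ⟨x, hx⟩)
  right
  obtain ⟨x₀, hx₀c, hx₀p⟩ := hex
  -- first vertex of p on c
  obtain ⟨a, ha, hac, hfirst⟩ :=
    exists_first (fun y => y ∈ c.support) p ⟨x₀, hx₀p, hx₀c⟩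
  set d := p.dropUntil a ha with hd
  have hdpath : d.IsPath := hp.1.dropUntil ha
  obtain ⟨b, hb, hbc, hlast⟩ :=
    exists_last (fun y => y ∈ c.support) d hdpath.support_nodup
      ⟨a, Walk.start_mem_support _, hac⟩
  set q := d.takeUntil b hb with hq
  have hqpath : q.IsPath := hdpath.takeUntil hb
  -- decomposition of p
  have hdec : (p.takeUntil a ha).append (q.append (d.dropUntil b hb)) = p := by
    rw [Walk.take_spec d hb]
    exact Walk.take_spec p ha
  -- q is shortest
  have hqs : IsShortest G w q := by
    refine ⟨hqpath, fun q' hq' => ?_⟩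
    set W := (p.takeUntil a ha).append (q'.append (d.dropUntil b hb)) with hW
    have h1 := hp.2 W.bypass W.bypass_isPath
    have h2 : walkWeight w W.bypass ≤ walkWeight w W := walkWeight_bypass_le w hw W
    rw [← hdec, walkWeight_append, walkWeight_append] at h1
    rw [hW, walkWeight_append, walkWeight_append] at h2
    linarith
  -- isometric + uniqueness: q lies on c
  obtain ⟨p', hp's, hp'c⟩ := hiso a b hac hbc
  have hqc : ∀ e ∈ q.edges, e ∈ c.edges := by
    rw [huniq a b q p' hqs hp's]; exact hp'c
  refine ⟨a, b, q, hqs, fun x => ⟨?_, fun hxq => ⟨?_, ?_⟩⟩, ?_⟩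
  · rintro ⟨hxc, hxp⟩
    rw [← Walk.take_spec p ha, Walk.mem_support_append_iff] at hxp
    rcases hxp with h | h
    · rw [hfirst x h hxc]
      exact Walk.start_mem_support _
    · rw [← hd, ← Walk.take_spec d hb, Walk.mem_support_append_iff] at h
      rcases h with h | h
      · exact h
      · rw [hlast x h hxc]
        exact Walk.end_mem_support _
  · -- x ∈ q.support → x ∈ c.support
    rcases mem_support_cases q hxq with rfl | ⟨e, he, hxe⟩
    · exact hac
    · have hec := hqc e he
      induction e using Sym2.ind with
      | _ y z =>
        rcases Sym2.mem_iff.mp hxe with rfl | rfl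
        · exact Walk.fst_mem_support_of_mem_edges c hec
        · exact Walk.snd_mem_support_of_mem_edges c hec
  · exact Walk.support_dropUntil_subset p ha (Walk.support_takeUntil_subset d hb hxq)
  · intro e he
    exact Walk.edges_dropUntil_subset p ha (Walk.edges_takeUntil_subset d hb he)
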